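/- Fix β > 0 and define h : ℝ → ℝ by h(η) = -Real.log (-η) - β * η - Real.log β - 1 if η > -1/β, and h(η) = 0 otherwise. Then h is convex on the interval (-∞, 0), i.e., ConvexOn ℝ (Set.Iio 0) h. -/

import Mathlib

/-- The Set KL divergence in natural parameterization `η = -1/β̂`: for fixed `β`,
`h β η = -log (-η) - β * η - log β - 1` if `η > -1/β`, and `0` otherwise. -/
noncomputable def setKLNat (β : ℝ) : ℝ → ℝ := fun η =>
  if -1 / β < η then -Real.log (-η) - β * η - Real.log β - 1 else 0

private lemma convexOn_comp' {s t : Set ℝ} {f g : ℝ → ℝ}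
    (hg : ConvexOn ℝ t g) (hf : ConvexOn ℝ s f) (hmaps : ∀ x ∈ s, f x ∈ t)
    (hg' : MonotoneOn g t) : ConvexOn ℝ s (g ∘ f) :=
  ⟨hf.1, fun x hx y hy a b ha hb hab =>
    (hg' (hmaps _ (hf.1 hx hy ha hb hab))
        (hg.1 (hmaps _ hx) (hmaps _ hy) ha hb hab)
        (hf.2 hx hy ha hb hab)).trans <|
      hg.2 (hmaps _ hx) (hmaps _ hy) ha hb hab⟩

theorem setKLNat_convexOn (β : ℝ) (hβ : 0 < β) :
    ConvexOn ℝ (Set.Iio (0 : ℝ)) (setKLNat β) := by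
  set c : ℝ := -1 / β with hc
  have hc0 : c < 0 := by
    rw [hc]; exact div_neg_of_neg_of_pos (by norm_num) hβ
  set f : ℝ → ℝ := fun η => -Real.log (-η) - β * η - Real.log β - 1 with hf
  -- f is convex on Ico c 0
  have hneglog : ConvexOn ℝ (Set.Iio (0:ℝ)) (fun η => -Real.log (-η)) := by
    have h1 : ConvexOn ℝ (Set.Ioi (0:ℝ)) (fun x => -Real.log x) :=
      strictConcaveOn_log_Ioi.concaveOn.neg
    have h2 := h1.comp_linearMap (-LinearMap.id (R := ℝ) (M := ℝ))
    have : ((-LinearMap.id (R := ℝ) (M := ℝ)) ⁻¹' Set.Ioi 0) = Set.Iio 0 := by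
      ext x; simp
    rw [this] at h2
    exact h2
  have hfconv : ConvexOn ℝ (Set.Iio (0:ℝ)) f := by
    have hlin : ConcaveOn ℝ (Set.Iio (0:ℝ))
        (fun η : ℝ => β * η + Real.log β + 1) := by
      have : ConcaveOn ℝ (Set.Iio (0:ℝ)) (fun η : ℝ => β * η) :=
        ((β • LinearMap.id : ℝ →ₗ[ℝ] ℝ).concaveOn (convex_Iio 0)).congr
          (fun x _ => by simp [smul_eq_mul])
      exact (this.add_const _).add_const _
    have := hneglog.sub hlin
    refine this.congr fun η _ => ?_
    simp only [hf, Pi.sub_apply]; ring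
  have hss : Set.Ico c (0:ℝ) ⊆ Set.Iio 0 := fun x hx => hx.2
  have hfconv' : ConvexOn ℝ (Set.Ico c (0:ℝ)) f :=
    hfconv.subset hss (convex_Ico _ _)
  -- f is monotone on Ico c 0
  have hmono : MonotoneOn f (Set.Ico c (0:ℝ)) := by
    intro x hx y hy hxy
    have hx0 : x < 0 := hx.2
    have hy0 : y < 0 := hy.2
    have hux : (0:ℝ) < -x := by linarith
    have huy : (0:ℝ) < -y := by linarith
    have hxle : -x ≤ 1/β := by
      have h := hx.1; rw [hc, neg_div] at h
      linarith
    -- log(-y) - log(-x) ≤ β * (x - y)  i.e. log((-y)/(-x)) ≤ ...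
    have key : Real.log (-y) - Real.log (-x) ≤ β * ((-y) - (-x)) := by
      have h1 : Real.log ((-y) / (-x)) ≤ (-y) / (-x) - 1 :=
        Real.log_le_sub_one_of_pos (div_pos huy hux)
      rw [Real.log_div (ne_of_gt huy) (ne_of_gt hux)] at h1
      have h2 : (-y) / (-x) - 1 = ((-y) - (-x)) / (-x) := by
        rw [sub_div, div_self hux.ne']
      rw [h2] at h1
      refine h1.trans ?_
      have hd : (-y) - (-x) ≤ 0 := by linarith
      have hinv : β ≤ 1 / (-x) := by
        rw [le_div_iff₀ hux]
        calc β * (-x) ≤ β * (1/β) := by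
              exact mul_le_mul_of_nonneg_left hxle (le_of_lt hβ)
          _ = 1 := by field_simp
      calc ((-y) - (-x)) / (-x) = ((-y) - (-x)) * (1 / (-x)) := by ring
        _ ≤ ((-y) - (-x)) * β := by
            exact mul_le_mul_of_nonpos_left hinv hd
        _ = β * ((-y) - (-x)) := by ring
    simp only [hf]
    nlinarith [key]
  -- max · c is convex on Iio 0 and maps into Ico c 0
  have hgconv : ConvexOn ℝ (Set.Iio (0:ℝ)) (fun η => max η c) := by
    have h := (convexOn_id (𝕜 := ℝ) (convex_Iio (0:ℝ))).sup
      (convexOn_const c (convex_Iio (0:ℝ)))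
    exact h.congr fun x _ => rfl
  have hmaps : ∀ x ∈ Set.Iio (0:ℝ), max x c ∈ Set.Ico c (0:ℝ) := by
    intro x hx
    exact ⟨le_max_right _ _, max_lt hx hc0⟩
  have hcomp : ConvexOn ℝ (Set.Iio (0:ℝ)) (f ∘ fun η => max η c) :=
    convexOn_comp' hfconv' hgconv hmaps hmono
  refine hcomp.congr ?_
  intro x hx
  simp only [Function.comp, setKLNat]
  by_cases h : c < x
  · rw [max_eq_left h.le, if_pos h]
  · rw [if_neg h, max_eq_right (not_lt.mp h)]
    simp only [hf]
    have : -c = 1/β := by rw [hc]; ring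
    rw [this]
    rw [Real.log_div one_ne_zero (ne_of_gt hβ), Real.log_one]
    rw [hc]
    field_simp
    ring
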